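/- arXiv:2504.00897 — 3 statements merged into one kernel-verified Lean document; each statement's English description precedes it below -/
import Mathlib

section
/- Let P ⊆ ℝ^d be a full-dimensional simple convex polytope with n facets, normal fan Σ_P and ray matrix U of rank d, and let Δ be a face of P of dimension ℓ with n_Δ facets. Let Δ^c be the set of facets Q of P with Q ∩ Δ = ∅. Then for each k there is an injective map F_k(A_Δ) ↪ F_{k+|Δ^c|}(A_P): explicitly, if a k-plane Λ ⊆ A_Δ ⊆ ℙ^{n_Δ−1} is cut out by n_Δ − k − 1 linear equations in the variables x_Q with Q ∩ Δ a facet of Δ, then the same equations cut out a linear subspace Λ′ of dimension k + |Δ^c| inside Λ_Δ ≅ ℙ^{n−1−(d−ℓ)}, and Λ′ is contained in A_P. -/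
open MvPolynomial Finset MeasureTheory
open scoped ENNReal

/-- The polyhedral cone spanned by the ray generators (rows of `U`) indexed by `σ`. -/
def coneOf {ι κ : Type*} [Fintype ι] (U : Matrix ι κ ℝ) (σ : Finset ι) : Set (κ → ℝ) :=
  {y | ∃ c : ι → ℝ, (∀ i, 0 ≤ c i) ∧ (∀ i, i ∉ σ → c i = 0) ∧ y = ∑ i, c i • U i}

/-- A simplicial polyhedral fan with rays indexed by `ι`, living in the space `κ → ℝ`.
Since the fan is simplicial, each cone is recorded by its finite set of rays. -/
structure SimplicialFan (ι κ : Type*) [Fintype ι] [DecidableEq ι] where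
  /-- the ray generator matrix: its rows are the chosen ray generators -/
  U : Matrix ι κ ℝ
  /-- the cones of the fan, each recorded by its set of rays -/
  cones : Finset (Finset ι)
  empty_mem : ∅ ∈ cones
  ray_mem : ∀ i : ι, {i} ∈ cones
  downward : ∀ σ ∈ cones, ∀ τ, τ ⊆ σ → τ ∈ cones
  indep : ∀ σ ∈ cones, LinearIndependent ℝ (fun i : σ => U i.1)
  inter : ∀ σ ∈ cones, ∀ τ ∈ cones, coneOf U σ ∩ coneOf U τ = coneOf U (σ ∩ τ)

/-- `|det|` of the square submatrix of `U` on the rows indexed by `σ`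
(zero if `σ` does not have exactly `card κ` elements). -/
noncomputable def absDetRows {ι κ : Type*} [Fintype κ] [DecidableEq κ]
    (U : Matrix ι κ ℝ) (σ : Finset ι) : ℝ :=
  if h : σ.card = Fintype.card κ then
    |(Matrix.of fun j k : κ =>
        U ((σ.equivFin.symm (Fintype.equivFinOfCardEq h.symm j)) : ι) k).det|
  else 0

/-- The universal adjoint polynomial of the fan data `(U, cones)`:
`Adj = ∑_{σ ∈ Σ(d)} |det U_σ| ∏_{ρ ∉ σ(1)} x_ρ`. -/
noncomputable def Adj {ι κ : Type*} [Fintype ι] [DecidableEq ι] [Fintype κ] [DecidableEq κ]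
    (U : Matrix ι κ ℝ) (cones : Finset (Finset ι)) : MvPolynomial ι ℝ :=
  ∑ σ ∈ cones.filter fun σ => σ.card = Fintype.card κ,
    MvPolynomial.C (absDetRows U σ) * ∏ ρ ∈ σᶜ, MvPolynomial.X ρ

/-- The toric amplitude `Amp = ∑_{σ ∈ Σ(d)} |det U_σ| / ∏_{ρ ∈ σ(1)} x_ρ`
as a real-valued function. -/
noncomputable def Amp {ι κ : Type*} [Fintype ι] [DecidableEq ι] [Fintype κ] [DecidableEq κ]
    (U : Matrix ι κ ℝ) (cones : Finset (Finset ι)) (x : ι → ℝ) : ℝ :=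
  ∑ σ ∈ cones.filter fun σ => σ.card = Fintype.card κ, absDetRows U σ / ∏ ρ ∈ σ, x ρ

/-- The toric amplitude with values in `ℝ≥0∞` (for identities with possibly infinite
dual volumes). -/
noncomputable def AmpE {ι κ : Type*} [Fintype ι] [DecidableEq ι] [Fintype κ] [DecidableEq κ]
    (U : Matrix ι κ ℝ) (cones : Finset (Finset ι)) (x : ι → ℝ) : ℝ≥0∞ :=
  ∑ σ ∈ cones.filter fun σ => σ.card = Fintype.card κ,
    ENNReal.ofReal (absDetRows U σ) / ∏ ρ ∈ σ, ENNReal.ofReal (x ρ)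

/-- The toric amplitude as an element of the field of rational functions. -/
noncomputable def AmpFrac {ι κ : Type*} [Fintype ι] [DecidableEq ι] [Fintype κ] [DecidableEq κ]
    (U : Matrix ι κ ℝ) (cones : Finset (Finset ι)) : FractionRing (MvPolynomial ι ℝ) :=
  ∑ σ ∈ cones.filter fun σ => σ.card = Fintype.card κ,
    algebraMap (MvPolynomial ι ℝ) (FractionRing (MvPolynomial ι ℝ)) (MvPolynomial.C (absDetRows U σ)) /
      algebraMap (MvPolynomial ι ℝ) (FractionRing (MvPolynomial ι ℝ)) (∏ ρ ∈ σ, MvPolynomial.X ρ)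

/-- The toric amplitude of fan data whose rays are indexed by a type `α` mapping to `ι`
via `f`, viewed inside the rational function field on the `ι`-variables. -/
noncomputable def AmpFracVia {α ι κ' : Type*} [Fintype α] [DecidableEq α]
    [Fintype κ'] [DecidableEq κ']
    (U' : Matrix α κ' ℝ) (cones' : Finset (Finset α)) (f : α → ι) :
    FractionRing (MvPolynomial ι ℝ) :=
  ∑ σ ∈ cones'.filter fun σ => σ.card = Fintype.card κ',
    algebraMap (MvPolynomial ι ℝ) (FractionRing (MvPolynomial ι ℝ)) (MvPolynomial.C (absDetRows U' σ)) /
      algebraMap (MvPolynomial ι ℝ) (FractionRing (MvPolynomial ι ℝ)) (∏ ρ ∈ σ, MvPolynomial.X (f ρ))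

/-- The polyhedron `P_z = {y : U y + z ≥ 0}`. -/
def Pz {ι κ : Type*} [Fintype κ] (U : Matrix ι κ ℝ) (z : ι → ℝ) : Set (κ → ℝ) :=
  {y | ∀ i, 0 ≤ (∑ j, U i j * y j) + z i}

/-- The face of `P_z` where the inequalities indexed by `τ` are tight. -/
def faceOf {ι κ : Type*} [Fintype κ] (U : Matrix ι κ ℝ) (z : ι → ℝ) (τ : Finset ι) :
    Set (κ → ℝ) :=
  {y | y ∈ Pz U z ∧ ∀ i ∈ τ, (∑ j, U i j * y j) + z i = 0}

/-- `F` is the normal fan of the polytope `P_z`, which is a full-dimensional simple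
(bounded) polytope whose facets are indexed by the rays of `F`: a set of inequalities
spans a cone of the normal fan iff they are simultaneously tight on a nonempty face. -/
def IsNormalFanOf {ι κ : Type*} [Fintype ι] [DecidableEq ι] [Fintype κ]
    (F : SimplicialFan ι κ) (z : ι → ℝ) : Prop :=
  Bornology.IsBounded (Pz F.U z) ∧ (interior (Pz F.U z)).Nonempty ∧
    ∀ σ : Finset ι, σ ∈ F.cones ↔ (faceOf F.U z σ).Nonempty

/-- The polar dual `{u : u ⬝ y ≥ -1 for all y ∈ P}`. -/
def polarDual {κ : Type*} [Fintype κ] (P : Set (κ → ℝ)) : Set (κ → ℝ) :=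
  {u | ∀ y ∈ P, -1 ≤ ∑ j, u j * y j}

/-- Warren's adjoint polynomial `adj_{P_z}(y) = Adj(U y + z)`. -/
noncomputable def warrenAdj {ι κ : Type*} [Fintype ι] [DecidableEq ι] [Fintype κ] [DecidableEq κ]
    (U : Matrix ι κ ℝ) (cones : Finset (Finset ι)) (z : ι → ℝ) : MvPolynomial κ ℝ :=
  MvPolynomial.aeval (fun i : ι => (∑ j, MvPolynomial.C (U i j) * MvPolynomial.X j) + MvPolynomial.C (z i))
    (Adj U cones)

/-- The neighbours `nb(τ)` of a cone `τ`: rays `ρ ∉ τ` with `τ ∪ {ρ}` a cone. -/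
def nbF {ι : Type*} [Fintype ι] [DecidableEq ι] (cones : Finset (Finset ι)) (τ : Finset ι) :
    Finset ι :=
  Finset.univ.filter fun ρ => ρ ∉ τ ∧ insert ρ τ ∈ cones

/-- The rows of `U * T` indexed by `τ` are the first `k` standard basis vectors. -/
def RowsStd {ι : Type*} {d : ℕ} (U : Matrix ι (Fin d) ℝ) (T : Matrix (Fin d) (Fin d) ℝ)
    (τ : Finset ι) (k : ℕ) : Prop :=
  ∃ g : {ρ : ι // ρ ∈ τ} → Fin d, Function.Injective g ∧ (∀ ρ, (g ρ : ℕ) < k) ∧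
    ∀ ρ : {ρ : ι // ρ ∈ τ}, (U * T) ρ.1 = Pi.single (g ρ) 1

/-- The ray matrix of the star fan `Σ_τ`: the last `d-k` columns of `U * T`, on the
rows indexed by `nb(τ)` (here `N`). -/
def starU {ι : Type*} {d : ℕ} (U : Matrix ι (Fin d) ℝ) (T : Matrix (Fin d) (Fin d) ℝ)
    (N : Finset ι) (k : ℕ) : Matrix {ρ : ι // ρ ∈ N} {j : Fin d // k ≤ (j : ℕ)} ℝ :=
  fun ρ j => (U * T) ρ.1 j.1

/-- The cones of the star fan `Σ_τ`, recorded by their sets of rays (as subsets of `N = nb(τ)`). -/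
def starCones {ι : Type*} [DecidableEq ι] (cones : Finset (Finset ι)) (τ : Finset ι)
    (N : Finset ι) : Finset (Finset {ρ : ι // ρ ∈ N}) :=
  (cones.filter fun σ => τ ⊆ σ).image fun σ => (σ \ τ).subtype fun ρ => ρ ∈ N

/-- Restriction of polynomials to the coordinate subspace `Λ_τ = {x_ρ = 0, ρ ∈ τ}`. -/
noncomputable def restrictTo {ι : Type*} {R : Type*} [CommSemiring R] [DecidableEq ι]
    (τ : Finset ι) : MvPolynomial ι R →ₐ[R] MvPolynomial ι R :=
  MvPolynomial.aeval fun ρ => if ρ ∈ τ then 0 else MvPolynomial.X ρ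

/-- The deformation cone of a (complete simplicial) fan: those `x` for which each
"virtual vertex" of `P_x` determined by a maximal cone satisfies all inequalities. -/
def DefCone {ι κ : Type*} [Fintype ι] [DecidableEq ι] [Fintype κ] (F : SimplicialFan ι κ) :
    Set (ι → ℝ) :=
  {x | ∀ σ ∈ F.cones, σ.card = Fintype.card κ →
    ∃ v : κ → ℝ, (∀ ρ ∈ σ, (∑ j, F.U ρ j * v j) + x ρ = 0) ∧
      ∀ ρ : ι, 0 ≤ (∑ j, F.U ρ j * v j) + x ρ}

/-- The `(d+1) × (d+1)` determinant `W_Δ(x)` of the matrix with rows `(u_ρ, x_ρ)`,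
`ρ ∈ S` (defined up to sign; zero if `S` does not have `d+1` elements). -/
noncomputable def Wdet {ι κ : Type*} [Fintype κ] [DecidableEq κ]
    (U : Matrix ι κ ℝ) (S : Finset ι) (x : ι → ℝ) : ℝ :=
  if h : S.card = Fintype.card (Option κ) then
    (Matrix.of fun a b : Option κ =>
      Option.elim b (x ((S.equivFin.symm (Fintype.equivFinOfCardEq h.symm a)) : ι))
        (fun k => U ((S.equivFin.symm (Fintype.equivFinOfCardEq h.symm a)) : ι) k)).det
  else 0

/-- The linear-algebra map behind the embedding `F_k(A_Δ) ↪ F_{k+|Δᶜ|}(A_P)`: it sends a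
linear subspace `W` of the coordinates indexed by `N = nb(τ)` to the subspace of `ℂ^ι`
cut out by the equations of `W` (in the `N`-coordinates) together with `x_ρ = 0, ρ ∈ τ`. -/
noncomputable def faceEmbedMap {ι : Type*} (τ N : Finset ι)
    (W : Submodule ℂ ({ρ : ι // ρ ∈ N} → ℂ)) : Submodule ℂ (ι → ℂ) :=
  W.comap (LinearMap.funLeft ℂ ℂ (Subtype.val : {ρ : ι // ρ ∈ N} → ι)) ⊓
    ⨅ ρ ∈ τ, LinearMap.ker (LinearMap.proj (R := ℂ) (φ := fun _ : ι => ℂ) ρ)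

/-! ### Auxiliary lemmas -/

open Matrix in
lemma abs_det_submatrix_equiv {m n : Type*} [DecidableEq m] [Fintype m] [DecidableEq n]
    [Fintype n] (M : Matrix n n ℝ) (e f : m ≃ n) :
    |(M.submatrix e f).det| = |M.det| := by
  have h : M.submatrix ⇑e ⇑f = (M.submatrix e e).submatrix id ⇑(f.trans e.symm) := by
    ext i j; simp [Matrix.submatrix_apply]
  rw [h, Matrix.det_permute', abs_mul, abs_unit_intCast, one_mul,
    Matrix.det_submatrix_equiv_self]

lemma absDetRows_eq_abs_det {ι κ : Type*} [Fintype κ] [DecidableEq κ]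
    (U : Matrix ι κ ℝ) (σ : Finset ι) (h : σ.card = Fintype.card κ)
    (e : κ ≃ {ρ : ι // ρ ∈ σ}) :
    absDetRows U σ = |(Matrix.of fun j l : κ => U (e j : ι) l).det| := by
  rw [absDetRows, dif_pos h]
  set e₀ : κ ≃ {ρ : ι // ρ ∈ σ} := (Fintype.equivFinOfCardEq h.symm).trans σ.equivFin.symm
    with he₀
  have key : (Matrix.of fun j l : κ =>
      U ((σ.equivFin.symm (Fintype.equivFinOfCardEq h.symm j)) : ι) l) =
      (Matrix.of fun j l : κ => U (e j : ι) l).submatrix ⇑(e₀.trans e.symm) id := by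
    ext j l; simp [Matrix.submatrix_apply, he₀]
  rw [key]
  exact abs_det_submatrix_equiv _ (e₀.trans e.symm) (Equiv.refl κ)

lemma card_ge_subtype {d k : ℕ} (hkd : k ≤ d) :
    Fintype.card {j : Fin d // k ≤ (j : ℕ)} = d - k := by
  have e : {j : Fin d // k ≤ (j : ℕ)} ≃ Fin (d - k) :=
    { toFun := fun j => ⟨j.1.1 - k, by have := j.1.2; have := j.2; omega⟩
      invFun := fun i => ⟨⟨i.1 + k, by have := i.2; omega⟩, by simp⟩
      left_inv := fun j => by have := j.2; ext; simp; omega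
      right_inv := fun i => by ext; simp }
  rw [Fintype.card_congr e, Fintype.card_fin]

lemma star_absDetRows {ι : Type*} [Fintype ι] [DecidableEq ι] {d k : ℕ}
    (U : Matrix ι (Fin d) ℝ) (T : Matrix (Fin d) (Fin d) ℝ) (τ N σ : Finset ι)
    (hτσ : τ ⊆ σ) (hστ : ∀ ρ ∈ σ \ τ, ρ ∈ N)
    (hσ : σ.card = d) (hk : τ.card = k)
    (g : {ρ : ι // ρ ∈ τ} → Fin d) (hg : Function.Injective g)
    (hlt : ∀ ρ, (g ρ : ℕ) < k)
    (hrow : ∀ ρ : {ρ : ι // ρ ∈ τ}, (U * T) ρ.1 = Pi.single (g ρ) 1) :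
    absDetRows (starU U T N k) ((σ \ τ).subtype fun ρ => ρ ∈ N) = |T.det| * absDetRows U σ := by
  have hkd : k ≤ d := by
    have h1 := Fintype.card_le_of_injective g hg
    rwa [Fintype.card_coe, Fintype.card_fin, hk] at h1
  set LT := {j : Fin d // (j : ℕ) < k}
  set GE := {j : Fin d // k ≤ (j : ℕ)}
  have eLT : LT ≃ Fin k :=
    { toFun := fun j => ⟨j.1.1, j.2⟩
      invFun := fun i => ⟨⟨i.1, lt_of_lt_of_le i.2 hkd⟩, i.2⟩
      left_inv := fun j => by ext; rfl
      right_inv := fun i => by ext; rfl }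
  have cardLT : Fintype.card LT = k := by rw [Fintype.card_congr eLT, Fintype.card_fin]
  have cardGE : Fintype.card GE = d - k := card_ge_subtype hkd
  set σ' : Finset {ρ : ι // ρ ∈ N} := (σ \ τ).subtype fun ρ => ρ ∈ N with hσ'
  have hσ'map : σ'.map (Function.Embedding.subtype _) = σ \ τ :=
    Finset.subtype_map_of_mem hστ
  have hcard' : σ'.card = d - k := by
    rw [← Finset.card_map, hσ'map, Finset.card_sdiff_of_subset hτσ, hσ, hk]
  have hcard'' : σ'.card = Fintype.card GE := by rw [cardGE, hcard']
  have e' : GE ≃ {x // x ∈ σ'} := Fintype.equivOfCardEq (by rw [Fintype.card_coe, hcard''])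
  have e'mem : ∀ b : GE, ((e' b : {x // x ∈ σ'}) : {ρ : ι // ρ ∈ N}).1 ∈ σ \ τ := by
    intro b
    have h2 : (e' b : {x // x ∈ σ'}).1 ∈ σ' := (e' b).2
    exact Finset.mem_subtype.mp h2
  have gbij : Function.Bijective (fun ρ : {ρ : ι // ρ ∈ τ} => (⟨g ρ, hlt ρ⟩ : LT)) := by
    refine (Fintype.bijective_iff_injective_and_card _).2
      ⟨?_, by rw [Fintype.card_coe, hk, cardLT]⟩
    intro a b h
    exact hg (congrArg Subtype.val h)
  set eτ : {ρ : ι // ρ ∈ τ} ≃ LT := Equiv.ofBijective _ gbij with heτ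
  have rbij : Function.Bijective (Sum.elim
      (fun a : LT => (⟨(eτ.symm a).1, hτσ (eτ.symm a).2⟩ : {x // x ∈ σ}))
      (fun b : GE => (⟨((e' b : {x // x ∈ σ'}) : {ρ : ι // ρ ∈ N}).1,
        (Finset.mem_sdiff.mp (e'mem b)).1⟩ : {x // x ∈ σ}))) := by
    refine (Fintype.bijective_iff_injective_and_card _).2 ⟨?_, ?_⟩
    · intro a b h
      rcases a with a | a <;> rcases b with b | b
      · simp only [Sum.elim_inl, Subtype.mk.injEq] at h
        have := eτ.symm.injective (Subtype.ext h)
        rw [this]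
      · exfalso
        simp only [Sum.elim_inl, Sum.elim_inr, Subtype.mk.injEq] at h
        have h1 : ((eτ.symm a) : ι) ∈ τ := (eτ.symm a).2
        have h2 := (Finset.mem_sdiff.mp (e'mem b)).2
        rw [h] at h1; exact h2 h1
      · exfalso
        simp only [Sum.elim_inl, Sum.elim_inr, Subtype.mk.injEq] at h
        have h1 : ((eτ.symm b) : ι) ∈ τ := (eτ.symm b).2
        have h2 := (Finset.mem_sdiff.mp (e'mem a)).2
        rw [← h] at h1; exact h2 h1
      · simp only [Sum.elim_inr, Subtype.mk.injEq] at h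
        have := e'.injective (Subtype.ext (Subtype.ext h))
        rw [this]
    · rw [Fintype.card_sum, cardLT, cardGE, Fintype.card_coe, hσ]; omega
  set r : LT ⊕ GE ≃ {x // x ∈ σ} := Equiv.ofBijective _ rbij with hr
  set c : LT ⊕ GE ≃ Fin d :=
    (Equiv.sumCongr (Equiv.refl LT) (Equiv.subtypeEquivRight (fun j => not_lt.symm))).trans
      (Equiv.sumCompl fun j : Fin d => (j : ℕ) < k) with hc
  have hcl : ∀ a : LT, c (Sum.inl a) = a.1 := fun a => rfl
  have hcr : ∀ b : GE, c (Sum.inr b) = b.1 := fun b => rfl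
  set e : Fin d ≃ {x // x ∈ σ} := c.symm.trans r with he
  set M : Matrix (Fin d) (Fin d) ℝ := Matrix.of fun j l => U (e j : ι) l with hM
  have habs : absDetRows U σ = |M.det| :=
    absDetRows_eq_abs_det U σ (by rw [hσ, Fintype.card_fin]) e
  set B : Matrix (LT ⊕ GE) (LT ⊕ GE) ℝ := (M * T).submatrix ⇑c ⇑c with hB
  have hdetB : B.det = M.det * T.det := by
    rw [hB, Matrix.det_submatrix_equiv_self, Matrix.det_mul]
  have hBentry : ∀ a b, B a b = (U * T) ((r a : {x // x ∈ σ}) : ι) (c b) := by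
    intro a b
    have h1 : (M * T) (c a) (c b) = (U * T) ((e (c a) : {x // x ∈ σ}) : ι) (c b) := by
      simp only [Matrix.mul_apply, hM, Matrix.of_apply]
    have h2 : e (c a) = r a := by simp [he]
    simp only [hB, Matrix.submatrix_apply, h1, h2]
  set D : Matrix GE GE ℝ := Matrix.of fun b c : GE =>
    starU U T N k ((e' b : {x // x ∈ σ'}) : {ρ : ι // ρ ∈ N}) c with hD
  have habs' : absDetRows (starU U T N k) σ' = |D.det| :=
    absDetRows_eq_abs_det _ σ' hcard'' e'
  have hblocks : B = Matrix.fromBlocks 1 0 (B.toBlocks₂₁) D := by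
    ext a b
    rcases a with a | a <;> rcases b with b | b
    · rw [hBentry]
      have hra : ((r (Sum.inl a) : {x // x ∈ σ}) : ι) = ((eτ.symm a) : ι) := rfl
      rw [hra, hcl, hrow (eτ.symm a)]
      have hga : g (eτ.symm a) = a.1 := by
        have h3 := congrArg Subtype.val (eτ.apply_symm_apply a)
        rw [heτ] at h3; exact h3
      rw [hga, Pi.single_apply]
      simp only [Matrix.fromBlocks_apply₁₁, Matrix.one_apply]
      by_cases hab : a = b
      · simp [hab]
      · rw [if_neg (fun h => hab (Subtype.ext h.symm)), if_neg hab]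
    · rw [hBentry]
      have hra : ((r (Sum.inl a) : {x // x ∈ σ}) : ι) = ((eτ.symm a) : ι) := rfl
      rw [hra, hcr, hrow (eτ.symm a)]
      have hga : g (eτ.symm a) = a.1 := by
        have h3 := congrArg Subtype.val (eτ.apply_symm_apply a)
        rw [heτ] at h3; exact h3
      rw [hga, Pi.single_apply]
      have hne : b.1 ≠ a.1 := by
        intro h
        have h1 : k ≤ (b.1 : ℕ) := b.2
        have h2 : (a.1 : ℕ) < k := a.2
        rw [h] at h1; omega
      simp [hne]
    · rfl
    · rw [hBentry]
      simp only [Matrix.fromBlocks_apply₂₂, hD, Matrix.of_apply, starU]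
      rfl
  have hdet2 : B.det = D.det := by
    rw [hblocks, Matrix.det_fromBlocks_zero₁₂, Matrix.det_one, one_mul]
  rw [habs', ← hdet2, hdetB, abs_mul, habs, mul_comm]

lemma mem_faceEmbedMap {ι : Type*} {τ N : Finset ι} {W : Submodule ℂ ({ρ : ι // ρ ∈ N} → ℂ)}
    {x : ι → ℂ} :
    x ∈ faceEmbedMap τ N W ↔
      (fun b : {ρ : ι // ρ ∈ N} => x b.1) ∈ W ∧ ∀ ρ ∈ τ, x ρ = 0 := by
  simp only [faceEmbedMap, Submodule.mem_inf, Submodule.mem_comap, Submodule.mem_iInf,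
    LinearMap.mem_ker, LinearMap.proj_apply]
  exact Iff.rfl

lemma aeval_Adj {ι κ : Type*} [Fintype ι] [DecidableEq ι] [Fintype κ] [DecidableEq κ]
    (U : Matrix ι κ ℝ) (cones : Finset (Finset ι)) (x : ι → ℂ) :
    MvPolynomial.aeval x (Adj U cones) =
      ∑ σ ∈ cones.filter fun σ => σ.card = Fintype.card κ,
        algebraMap ℝ ℂ (absDetRows U σ) * ∏ ρ ∈ σᶜ, x ρ := by
  simp [Adj, map_sum, map_mul, map_prod, MvPolynomial.aeval_C, MvPolynomial.aeval_X]

set_option maxHeartbeats 2000000 in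
/-- (Fano schemes of faces embed.) Let `Δ` be the face of the simple
polytope `P` with normal cone `τ`, let `N = nb(τ)` index the facets of `Δ`, and let
`Δᶜ = (N ∪ τ)ᶜ` index the facets of `P` disjoint from `Δ`. The map sending a linear
subspace of `ℙ^{n_Δ-1}` (given by equations in the variables `x_Q`, `Q ∩ Δ` a facet
of `Δ`) to the subspace of `Λ_Δ ⊆ ℙ^{n-1}` cut out by the same equations is injective,
raises dimension by exactly `|Δᶜ|`, and sends subspaces contained in `A_Δ` to subspaces
contained in `A_P`; hence for each `k` it induces an injection
`F_k(A_Δ) ↪ F_{k+|Δᶜ|}(A_P)`. -/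
theorem statement11 {ι : Type*} [Fintype ι] [DecidableEq ι] {d k : ℕ}
    (F : SimplicialFan ι (Fin d)) (hrank : F.U.rank = d)
    (z : ι → ℝ) (hz : IsNormalFanOf F z)
    (τ : Finset ι) (hτ : τ ∈ F.cones) (hcard : τ.card = k)
    (T : Matrix (Fin d) (Fin d) ℝ) (hdet : T.det ≠ 0) (hT : RowsStd F.U T τ k) :
    Function.Injective (faceEmbedMap τ (nbF F.cones τ)) ∧
    (∀ W : Submodule ℂ ({ρ : ι // ρ ∈ nbF F.cones τ} → ℂ),
      Module.finrank ℂ (faceEmbedMap τ (nbF F.cones τ) W) =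
        Module.finrank ℂ W + ((nbF F.cones τ ∪ τ)ᶜ).card) ∧
    ∀ W : Submodule ℂ ({ρ : ι // ρ ∈ nbF F.cones τ} → ℂ),
      (∀ w ∈ W, MvPolynomial.aeval w
          (Adj (starU F.U T (nbF F.cones τ) k) (starCones F.cones τ (nbF F.cones τ))) = 0) →
      ∀ x ∈ faceEmbedMap τ (nbF F.cones τ) W,
        MvPolynomial.aeval x (Adj F.U F.cones) = 0 := by
  set N := nbF F.cones τ with hN
  have hτN : ∀ ρ ∈ τ, ρ ∉ N := by
    intro ρ hρ h
    exact (Finset.mem_filter.mp h).2.1 hρ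
  have hle : ∀ W₁ W₂ : Submodule ℂ ({ρ : ι // ρ ∈ N} → ℂ),
      faceEmbedMap τ N W₁ = faceEmbedMap τ N W₂ → W₁ ≤ W₂ := by
    intro W₁ W₂ h w hw
    set x : ι → ℂ := fun ρ => if hρ : ρ ∈ N then w ⟨ρ, hρ⟩ else 0 with hxdef
    have hwx : (fun b : {ρ : ι // ρ ∈ N} => x b.1) = w := by
      funext b; simp [hxdef, b.2]
    have hx1 : x ∈ faceEmbedMap τ N W₁ := by
      rw [mem_faceEmbedMap]
      exact ⟨hwx ▸ hw, fun ρ hρ => by simp [hxdef, hτN ρ hρ]⟩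
    rw [h, mem_faceEmbedMap] at hx1
    exact hwx ▸ hx1.1
  refine ⟨fun W₁ W₂ h => le_antisymm (hle _ _ h) (hle _ _ h.symm), ?_, ?_⟩
  · intro W
    set S : Finset ι := (N ∪ τ)ᶜ with hS
    set V := faceEmbedMap τ N W with hV
    let L1 : V →ₗ[ℂ] ({ρ : ι // ρ ∈ N} → ℂ) :=
      (LinearMap.funLeft ℂ ℂ (Subtype.val : {ρ : ι // ρ ∈ N} → ι)).comp V.subtype
    have hL1 : ∀ v : V, L1 v ∈ W := fun v => (mem_faceEmbedMap.mp v.2).1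
    let Φ : V →ₗ[ℂ] W × ({ρ : ι // ρ ∈ S} → ℂ) :=
      (LinearMap.codRestrict W L1 hL1).prod
        ((LinearMap.funLeft ℂ ℂ (Subtype.val : {ρ : ι // ρ ∈ S} → ι)).comp V.subtype)
    have hbij : Function.Bijective Φ := by
      constructor
      · intro v₁ v₂ h
        have h1 : L1 v₁ = L1 v₂ := congrArg Subtype.val (congrArg Prod.fst h)
        have h2 := congrArg Prod.snd h
        apply Subtype.ext
        funext ρ
        by_cases hρN : ρ ∈ N
        · exact congrFun h1 ⟨ρ, hρN⟩
        · by_cases hρS : ρ ∈ S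
          · exact congrFun h2 ⟨ρ, hρS⟩
          · have hρτ : ρ ∈ τ := by
              simp only [hS, Finset.mem_compl, not_not, Finset.mem_union] at hρS
              tauto
            rw [(mem_faceEmbedMap.mp v₁.2).2 ρ hρτ, (mem_faceEmbedMap.mp v₂.2).2 ρ hρτ]
      · rintro ⟨w, s⟩
        set x : ι → ℂ := fun ρ =>
          if h : ρ ∈ N then (w : {ρ : ι // ρ ∈ N} → ℂ) ⟨ρ, h⟩
          else if h : ρ ∈ S then s ⟨ρ, h⟩ else 0 with hxdef
        have hwx : (fun b : {ρ : ι // ρ ∈ N} => x b.1) = (w : {ρ : ι // ρ ∈ N} → ℂ) := by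
          funext b; simp [hxdef, b.2]
        have hx : x ∈ V := by
          rw [hV, mem_faceEmbedMap]
          refine ⟨hwx ▸ w.2, fun ρ hρ => ?_⟩
          have hρS : ρ ∉ S := by
            simp only [hS, Finset.mem_compl, not_not, Finset.mem_union]; tauto
          simp [hxdef, hτN ρ hρ, hρS]
        refine ⟨⟨x, hx⟩, ?_⟩
        refine Prod.ext (Subtype.ext ?_) ?_
        · exact hwx
        · funext b
          have hbN : (b : ι) ∉ N := by
            have hb := Finset.mem_compl.mp b.2
            exact fun h => hb (Finset.mem_union_left _ h)
          simp [Φ, L1, LinearMap.funLeft_apply, hxdef, hbN, b.2]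
    rw [LinearEquiv.finrank_eq (LinearEquiv.ofBijective Φ hbij), Module.finrank_prod,
      Module.finrank_pi, Fintype.card_coe]
  · intro W hvan x hx
    obtain ⟨hxW, hxτ⟩ := mem_faceEmbedMap.mp hx
    obtain ⟨g, hg, hlt, hrow⟩ := hT
    have hkd : k ≤ d := by
      have h1 := Fintype.card_le_of_injective g hg
      rwa [Fintype.card_coe, Fintype.card_fin, hcard] at h1
    have cardGE : Fintype.card {j : Fin d // k ≤ (j : ℕ)} = d - k := card_ge_subtype hkd
    have hstar : ∀ σ, σ ∈ F.cones → τ ⊆ σ → ∀ ρ ∈ σ \ τ, ρ ∈ N := by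
      intro σ hσc hτσ ρ hρ
      obtain ⟨hρσ, hρτ⟩ := Finset.mem_sdiff.mp hρ
      rw [hN]
      exact Finset.mem_filter.mpr ⟨Finset.mem_univ _, hρτ,
        F.downward σ hσc _ (Finset.insert_subset hρσ hτσ)⟩
    have h0 := hvan (fun b => x b.1) hxW
    rw [aeval_Adj] at h0
    rw [aeval_Adj]
    have hvanish : ∀ σ ∈ F.cones.filter fun σ => σ.card = Fintype.card (Fin d),
        (algebraMap ℝ ℂ (absDetRows F.U σ) * ∏ ρ ∈ σᶜ, x ρ) ≠ 0 → τ ⊆ σ := by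
      intro σ _ hne
      by_contra hns
      obtain ⟨ρ, hρτ, hρσ⟩ := Finset.not_subset.mp hns
      exact hne (by rw [Finset.prod_eq_zero (Finset.mem_compl.mpr hρσ) (hxτ ρ hρτ), mul_zero])
    rw [← Finset.sum_filter_of_ne hvanish]
    set A : Finset (Finset ι) :=
      (F.cones.filter fun σ => σ.card = Fintype.card (Fin d)).filter fun σ => τ ⊆ σ with hA
    set B : Finset (Finset {ρ : ι // ρ ∈ N}) :=
      (starCones F.cones τ N).filter
        fun σ' => σ'.card = Fintype.card {j : Fin d // k ≤ (j : ℕ)} with hB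
    have hAfacts : ∀ σ ∈ A, τ ⊆ σ ∧ σ ∈ F.cones ∧ σ.card = d ∧ ∀ ρ ∈ σ \ τ, ρ ∈ N := by
      intro σ hσ
      obtain ⟨hσ1, hσ2⟩ := Finset.mem_filter.mp hσ
      obtain ⟨hσ3, hσ4⟩ := Finset.mem_filter.mp hσ1
      exact ⟨hσ2, hσ3, by rwa [Fintype.card_fin] at hσ4, hstar σ hσ3 hσ2⟩
    have hne : algebraMap ℝ ℂ |T.det| ≠ 0 := by
      intro h
      exact abs_ne_zero.mpr hdet ((algebraMap ℝ ℂ).injective (by rw [h, map_zero]))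
    have keyterm : ∀ σ ∈ A,
        algebraMap ℝ ℂ |T.det| * (algebraMap ℝ ℂ (absDetRows F.U σ) * ∏ ρ ∈ σᶜ, x ρ) =
          (∏ ρ ∈ (N ∪ τ)ᶜ, x ρ) *
            (algebraMap ℝ ℂ (absDetRows (starU F.U T N k) ((σ \ τ).subtype fun ρ => ρ ∈ N)) *
              ∏ b ∈ ((σ \ τ).subtype fun ρ => ρ ∈ N)ᶜ, x b.1) := by
      intro σ hσ
      obtain ⟨hτσ, hσcone, hσcard, hστ⟩ := hAfacts σ hσ
      have hdetid := star_absDetRows F.U T τ N σ hτσ hστ hσcard hcard g hg hlt hrow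
      have hprodsplit : σᶜ = (N \ (σ \ τ)) ∪ (N ∪ τ)ᶜ := by
        ext ρ
        have h1 : ρ ∈ τ → ρ ∉ N := hτN ρ
        have h2 : ρ ∈ σ → ρ ∉ τ → ρ ∈ N := fun a b => hστ ρ (Finset.mem_sdiff.mpr ⟨a, b⟩)
        have h3 : ρ ∈ τ → ρ ∈ σ := fun a => hτσ a
        simp only [Finset.mem_compl, Finset.mem_union, Finset.mem_sdiff]
        tauto
      have hdisj : Disjoint (N \ (σ \ τ)) ((N ∪ τ)ᶜ) := by
        rw [Finset.disjoint_left]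
        intro a ha hb
        exact (Finset.mem_compl.mp hb) (Finset.mem_union_left _ (Finset.mem_sdiff.mp ha).1)
      have hsub : ∏ b ∈ ((σ \ τ).subtype fun ρ => ρ ∈ N)ᶜ, x b.1 = ∏ ρ ∈ N \ (σ \ τ), x ρ := by
        refine Finset.prod_bij (fun b _ => (b : ι)) ?_ ?_ ?_ ?_
        · intro b hb
          exact Finset.mem_sdiff.mpr ⟨b.2,
            fun hc => (Finset.mem_compl.mp hb) (Finset.mem_subtype.mpr hc)⟩
        · intro a _ b _ h
          exact Subtype.ext h
        · intro ρ hρ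
          obtain ⟨hρN, hρns⟩ := Finset.mem_sdiff.mp hρ
          exact ⟨⟨ρ, hρN⟩, Finset.mem_compl.mpr (fun hc => hρns (Finset.mem_subtype.mp hc)), rfl⟩
        · intro b _
          rfl
      rw [hprodsplit, Finset.prod_union hdisj, hsub, hdetid, map_mul]
      ring
    have hscaled : algebraMap ℝ ℂ |T.det| *
        ∑ σ ∈ A, (algebraMap ℝ ℂ (absDetRows F.U σ) * ∏ ρ ∈ σᶜ, x ρ) = 0 := by
      rw [Finset.mul_sum]
      calc ∑ σ ∈ A, algebraMap ℝ ℂ |T.det| *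
              (algebraMap ℝ ℂ (absDetRows F.U σ) * ∏ ρ ∈ σᶜ, x ρ)
          = ∑ σ ∈ A, (∏ ρ ∈ (N ∪ τ)ᶜ, x ρ) *
              (algebraMap ℝ ℂ (absDetRows (starU F.U T N k)
                  ((σ \ τ).subtype fun ρ => ρ ∈ N)) *
                ∏ b ∈ ((σ \ τ).subtype fun ρ => ρ ∈ N)ᶜ, x b.1) :=
            Finset.sum_congr rfl keyterm
        _ = ∑ σ' ∈ B, (∏ ρ ∈ (N ∪ τ)ᶜ, x ρ) *
              (algebraMap ℝ ℂ (absDetRows (starU F.U T N k) σ') * ∏ b ∈ σ'ᶜ, x b.1) := by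
            refine Finset.sum_bij (fun σ _ => (σ \ τ).subtype fun ρ => ρ ∈ N) ?_ ?_ ?_ ?_
            · intro σ hσ
              obtain ⟨hτσ, hσcone, hσcard, hστ⟩ := hAfacts σ hσ
              refine Finset.mem_filter.mpr ⟨?_, ?_⟩
              · exact Finset.mem_image.mpr ⟨σ, Finset.mem_filter.mpr ⟨hσcone, hτσ⟩, rfl⟩
              · have h5 := Finset.subtype_map_of_mem hστ
                rw [cardGE, ← Finset.card_map (Function.Embedding.subtype _), h5,
                  Finset.card_sdiff_of_subset hτσ, hσcard, hcard]
            · intro σ₁ hσ₁ σ₂ hσ₂ h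
              obtain ⟨hτσ₁, _, _, hστ₁⟩ := hAfacts σ₁ hσ₁
              obtain ⟨hτσ₂, _, _, hστ₂⟩ := hAfacts σ₂ hσ₂
              have h₁ := congrArg (Finset.map (Function.Embedding.subtype _)) h
              rw [Finset.subtype_map_of_mem hστ₁, Finset.subtype_map_of_mem hστ₂] at h₁
              have h₂ := congrArg (· ∪ τ) h₁
              simpa [Finset.sdiff_union_of_subset hτσ₁,
                Finset.sdiff_union_of_subset hτσ₂] using h₂
            · intro σ' hσ'
              obtain ⟨hσ'1, hσ'2⟩ := Finset.mem_filter.mp hσ'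
              obtain ⟨σ₀, hσ₀, hmap⟩ := Finset.mem_image.mp hσ'1
              obtain ⟨hσ₀c, hτσ₀⟩ := Finset.mem_filter.mp hσ₀
              have hστ₀ := hstar σ₀ hσ₀c hτσ₀
              have h5 := Finset.subtype_map_of_mem hστ₀
              have hcard₀ : (σ₀ \ τ).card = d - k := by
                rw [← h5, Finset.card_map, hmap, hσ'2, cardGE]
              have hcardσ₀ : σ₀.card = d := by
                have h4 := Finset.card_sdiff_add_card_eq_card hτσ₀
                omega
              refine ⟨σ₀, Finset.mem_filter.mpr
                ⟨Finset.mem_filter.mpr ⟨hσ₀c, by rw [Fintype.card_fin]; exact hcardσ₀⟩, hτσ₀⟩,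
                hmap⟩
            · intro σ hσ
              rfl
        _ = 0 := by
            rw [← Finset.mul_sum]
            have h00 : ∑ σ' ∈ B,
                (algebraMap ℝ ℂ (absDetRows (starU F.U T N k) σ') * ∏ b ∈ σ'ᶜ, x b.1) = 0 := h0
            rw [h00, mul_zero]
    exact (mul_eq_zero.mp hscaled).resolve_left hne
end

section
/- Let Σ be the normal fan of a full-dimensional simple polytope P ⊂ ℝ^d with n facets and ray matrix U ∈ ℝ^{n×d}, and let Δ ⊆ P be a face that is a simplex of dimension d−k > 0 with normal cone σ_Δ. Then the (n−k−2)-dimensional linear subspace of ℙ^{n−1} defined by W_Δ(x) = 0 and x_ρ = 0 for all ρ ∈ σ_Δ(1) is contained both in the universal adjoint hypersurface A_Σ and in the projectivized Zariski closure of the (n−1)-skeleton of the chamber complex Ch(U); in particular, the affine hyperplane {W_Δ(x) = 0} ⊂ ℝ^n equals span_ℝ(e_ρ : ρ ∈ K_Δ) + im(U) with K_Δ = Σ(1)∖(nb(Δ) ∪ σ_Δ(1)), the linear span of an (n−1)-dimensional cone of Ch(U). -/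
open MvPolynomial Finset MeasureTheory
open scoped ENNReal

section S13Aux
set_option linter.unusedSectionVars false
set_option linter.unusedVariables false
variable {ι κ : Type*} [Fintype ι] [DecidableEq ι] [Fintype κ] [DecidableEq κ]

-- ==== auxiliary development ====

/-- slack of inequality `i` at point `v`. -/
def slk (U : Matrix ι κ ℝ) (z : ι → ℝ) (v : κ → ℝ) (i : ι) : ℝ := (∑ j, U i j * v j) + z i

open Classical in
noncomputable def tightSet (U : Matrix ι κ ℝ) (z : ι → ℝ) (v : κ → ℝ) : Finset ι :=
  Finset.univ.filter fun i => slk U z v i = 0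

lemma mem_tightSet {U : Matrix ι κ ℝ} {z : ι → ℝ} {v : κ → ℝ} {i : ι} :
    i ∈ tightSet U z v ↔ slk U z v i = 0 := by
  classical simp [tightSet]

lemma mem_Pz_iff {U : Matrix ι κ ℝ} {z : ι → ℝ} {v : κ → ℝ} :
    v ∈ Pz U z ↔ ∀ i, 0 ≤ slk U z v i := Iff.rfl

lemma slk_add_smul (U : Matrix ι κ ℝ) (z : ι → ℝ) (v w : κ → ℝ) (t : ℝ) (i : ι) :
    slk U z (v + t • w) i = slk U z v i + t * ∑ j, U i j * w j := by
  simp only [slk, Pi.add_apply, Pi.smul_apply, smul_eq_mul, mul_add, Finset.sum_add_distrib,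
    Finset.mul_sum]
  rw [add_right_comm]
  congr 1
  apply Finset.sum_congr rfl; intro j _; ring

lemma tight_mem_cones (F : SimplicialFan ι κ) (z : ι → ℝ) (hz : IsNormalFanOf F z)
    (v : κ → ℝ) (hv : v ∈ Pz F.U z) : tightSet F.U z v ∈ F.cones :=
  (hz.2.2 _).mpr ⟨v, hv, fun i hi => mem_tightSet.mp hi⟩

lemma card_cone_le (F : SimplicialFan ι κ) {σ : Finset ι} (hσ : σ ∈ F.cones) :
    σ.card ≤ Fintype.card κ := by
  have h := (F.indep σ hσ).fintype_card_le_finrank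
  simpa [Fintype.card_coe, Module.finrank_fintype_fun_eq_card] using h

lemma exists_ker (U : Matrix ι κ ℝ) (A : Finset ι) (hA : A.card < Fintype.card κ) :
    ∃ w : κ → ℝ, w ≠ 0 ∧ ∀ i ∈ A, ∑ j, U i j * w j = 0 := by
  classical
  set M' : Matrix {i // i ∈ A} κ ℝ := U.submatrix Subtype.val id with hM'
  have hne : LinearMap.ker M'.mulVecLin ≠ ⊥ := by
    intro h
    have hinj := LinearMap.ker_eq_bot.mp h
    have h2 := LinearMap.finrank_le_finrank_of_injective hinj
    rw [Module.finrank_fintype_fun_eq_card, Module.finrank_fintype_fun_eq_card,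
      Fintype.card_coe] at h2
    omega
  obtain ⟨w, hwker, hw0⟩ := (Submodule.ne_bot_iff _).mp hne
  refine ⟨w, hw0, fun i hi => ?_⟩
  have h3 := congrFun (LinearMap.mem_ker.mp hwker) ⟨i, hi⟩
  simpa [hM', Matrix.mulVecLin_apply, Matrix.mulVec, dotProduct] using h3

lemma not_ray_bounded {P : Set (κ → ℝ)} (hB : Bornology.IsBounded P) {v w : κ → ℝ}
    (hw : w ≠ 0) (hr : ∀ t : ℝ, 0 ≤ t → v + t • w ∈ P) : False := by
  obtain ⟨Cb, hC⟩ := isBounded_iff_forall_norm_le.mp hB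
  have hwpos : 0 < ‖w‖ := norm_pos_iff.mpr hw
  set t := (Cb + ‖v‖ + 1) / ‖w‖ with htdef
  have hvP : v ∈ P := by simpa using hr 0 le_rfl
  have hCb : 0 ≤ Cb := le_trans (norm_nonneg v) (hC v hvP)
  have ht : 0 ≤ t := by positivity
  have h1 : ‖v + t • w‖ ≤ Cb := hC _ (hr t ht)
  have h2 : ‖t • w‖ ≤ ‖v + t • w‖ + ‖v‖ := by
    calc ‖t • w‖ = ‖(v + t • w) - v‖ := by ring_nf
    _ ≤ ‖v + t • w‖ + ‖v‖ := norm_sub_le _ _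
  have h3 : ‖t • w‖ = Cb + ‖v‖ + 1 := by
    rw [norm_smul, Real.norm_eq_abs, abs_of_nonneg ht, htdef, div_mul_cancel₀ _ hwpos.ne']
  linarith

lemma push (U : Matrix ι κ ℝ) (z : ι → ℝ) (hB : Bornology.IsBounded (Pz U z))
    {v w : κ → ℝ} (hv : v ∈ Pz U z) (hw : w ≠ 0)
    (ha : ∀ i, slk U z v i = 0 → 0 ≤ ∑ j, U i j * w j) :
    ∃ t : ℝ, 0 < t ∧ v + t • w ∈ Pz U z ∧
      ∃ i, (∑ j, U i j * w j) < 0 ∧ slk U z (v + t • w) i = 0 := by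
  classical
  set a : ι → ℝ := fun i => ∑ j, U i j * w j with hadef
  by_cases hne : (Finset.univ.filter fun i => a i < 0).Nonempty
  · obtain ⟨i₀, hi₀mem, hi₀min⟩ :=
      Finset.exists_min_image _ (fun i => slk U z v i / (-a i)) hne
    have hai₀ : a i₀ < 0 := (Finset.mem_filter.mp hi₀mem).2
    have hsi₀ : 0 < slk U z v i₀ := by
      rcases lt_or_eq_of_le (hv i₀) with h | h
      · exact h
      · exact absurd (ha i₀ h.symm) (not_le.mpr hai₀)
    set t := slk U z v i₀ / (-a i₀) with htdef
    have ht : 0 < t := div_pos hsi₀ (neg_pos.mpr hai₀)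
    refine ⟨t, ht, ?_, i₀, hai₀, ?_⟩
    · intro i
      show 0 ≤ (∑ j, U i j * (v + t • w) j) + z i
      have : (∑ j, U i j * (v + t • w) j) + z i = slk U z v i + t * a i :=
        slk_add_smul U z v w t i
      rw [this]
      rcases le_or_gt 0 (a i) with h | h
      · exact add_nonneg (hv i) (mul_nonneg ht.le h)
      · have hle : t ≤ slk U z v i / (-a i) :=
          hi₀min i (Finset.mem_filter.mpr ⟨Finset.mem_univ i, h⟩)
        have h2 : slk U z v i / (-a i) * a i = -slk U z v i := by
          rw [div_neg, neg_mul, div_mul_cancel₀ _ (ne_of_lt h)]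
        nlinarith [mul_le_mul_of_nonpos_right hle h.le]
    · rw [slk_add_smul]
      have h2 : t * a i₀ = -slk U z v i₀ := by
        rw [htdef, div_neg, neg_mul, div_mul_cancel₀ _ (ne_of_lt hai₀)]
      rw [h2]; ring
  · exfalso
    refine not_ray_bounded hB hw (v := v) (fun t htnn => ?_)
    intro i
    show 0 ≤ (∑ j, U i j * (v + t • w) j) + z i
    have heq : (∑ j, U i j * (v + t • w) j) + z i = slk U z v i + t * a i :=
      slk_add_smul U z v w t i
    rw [heq]
    have hai : 0 ≤ a i := by
      by_contra hneg
      exact hne ⟨i, Finset.mem_filter.mpr ⟨Finset.mem_univ i, not_le.mp hneg⟩⟩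
    exact add_nonneg (hv i) (mul_nonneg htnn hai)

lemma grow (F : SimplicialFan ι κ) (z : ι → ℝ) (hz : IsNormalFanOf F z) :
    ∀ (m : ℕ) (v : κ → ℝ), v ∈ Pz F.U z → Fintype.card κ - (tightSet F.U z v).card ≤ m →
    ∃ v' ∈ Pz F.U z, tightSet F.U z v ⊆ tightSet F.U z v' ∧
      (tightSet F.U z v').card = Fintype.card κ := by
  intro m
  induction m with
  | zero =>
    intro v hv h0
    have hle := card_cone_le F (tight_mem_cones F z hz v hv)
    exact ⟨v, hv, subset_rfl, by omega⟩
  | succ m ih =>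
    intro v hv hm
    by_cases hfull : (tightSet F.U z v).card = Fintype.card κ
    · exact ⟨v, hv, subset_rfl, hfull⟩
    · have hle := card_cone_le F (tight_mem_cones F z hz v hv)
      have hlt : (tightSet F.U z v).card < Fintype.card κ := lt_of_le_of_ne hle hfull
      obtain ⟨w, hw0, hwk⟩ := exists_ker F.U (tightSet F.U z v) hlt
      obtain ⟨t, ht, hv', i₀, hai₀, hti₀⟩ :=
        push F.U z hz.1 hv hw0 (fun i hi => (hwk i (mem_tightSet.mpr hi)).ge)
      have hsub : tightSet F.U z v ⊆ tightSet F.U z (v + t • w) := by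
        intro i hi
        refine mem_tightSet.mpr ?_
        rw [slk_add_smul, hwk i hi, mul_zero, add_zero]
        exact mem_tightSet.mp hi
      have hi₀T : i₀ ∈ tightSet F.U z (v + t • w) := mem_tightSet.mpr hti₀
      have hi₀v : i₀ ∉ tightSet F.U z v := fun hmem => absurd (hwk i₀ hmem) (ne_of_lt hai₀)
      have hcard : (tightSet F.U z v).card < (tightSet F.U z (v + t • w)).card :=
        Finset.card_lt_card ⟨hsub, fun hsup => hi₀v (hsup hi₀T)⟩
      obtain ⟨v'', hv''P, hsub', hcard'⟩ := ih (v + t • w) hv' (by omega)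
      exact ⟨v'', hv''P, hsub.trans hsub', hcard'⟩

lemma cone_subset (F : SimplicialFan ι κ) (τ : Finset ι) {σ : Finset ι}
    (hσ : σ ∈ F.cones) (hτσ : τ ⊆ σ) : σ ⊆ nbF F.cones τ ∪ τ := by
  intro ρ hρ
  by_cases hρτ : ρ ∈ τ
  · exact Finset.mem_union_right _ hρτ
  · refine Finset.mem_union_left _ (Finset.mem_filter.mpr ⟨Finset.mem_univ ρ, hρτ, ?_⟩)
    exact F.downward σ hσ _ (Finset.insert_subset hρ hτσ)

lemma eq_zero_of_forall_row (F : SimplicialFan ι κ) {σ : Finset ι} (hσ : σ ∈ F.cones)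
    (hcard : σ.card = Fintype.card κ) (hpos : 0 < Fintype.card κ) {w : κ → ℝ}
    (hw : ∀ i ∈ σ, ∑ j, F.U i j * w j = 0) : w = 0 := by
  have hneσ : σ.Nonempty := Finset.card_pos.mp (by omega)
  have hne : Nonempty {i // i ∈ σ} := ⟨⟨hneσ.choose, hneσ.choose_spec⟩⟩
  have hsp : Submodule.span ℝ (Set.range fun i : σ => F.U i.1) = ⊤ :=
    (F.indep σ hσ).span_eq_top_of_card_eq_finrank
      (by simp [Fintype.card_coe, hcard, Module.finrank_fintype_fun_eq_card])
  have hw' : ∀ x ∈ Submodule.span ℝ (Set.range fun i : σ => F.U i.1), ∑ j, x j * w j = 0 := by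
    intro x hx
    induction hx using Submodule.span_induction with
    | mem x hx => obtain ⟨i, rfl⟩ := hx; exact hw i.1 i.2
    | zero => simp
    | add x y _ _ hx hy => simp only [Pi.add_apply, add_mul, Finset.sum_add_distrib, hx, hy,
        add_zero]
    | smul c x _ hx =>
      simp only [Pi.smul_apply, smul_eq_mul, mul_assoc, ← Finset.mul_sum, hx, mul_zero]
  have hww : ∑ j, w j * w j = 0 := hw' w (by rw [hsp]; trivial)
  funext j
  have h1 := (Finset.sum_eq_zero_iff_of_nonneg (fun j _ => mul_self_nonneg (w j))).mp hww j
    (Finset.mem_univ j)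
  exact mul_self_eq_zero.mp h1

lemma erase_mem_cones (F : SimplicialFan ι κ) (z : ι → ℝ) (hz : IsNormalFanOf F z)
    (τ : Finset ι) (hτ : τ ∈ F.cones)
    (hScard : (nbF F.cones τ ∪ τ).card = Fintype.card κ + 1) :
    ∀ ρ ∈ nbF F.cones τ, (nbF F.cones τ ∪ τ).erase ρ ∈ F.cones := by
  intro ρ hρ
  set S := nbF F.cones τ ∪ τ with hSdef
  have hρτ : ρ ∉ τ := (Finset.mem_filter.mp hρ).2.1
  have hρS : ρ ∈ S := Finset.mem_union_left _ hρ
  obtain ⟨y₀, hy₀P, hy₀t⟩ := (hz.2.2 τ).mp hτ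
  have hτty₀ : τ ⊆ tightSet F.U z y₀ := fun i hi => mem_tightSet.mpr (hy₀t i hi)
  obtain ⟨v, hvP, hsub, hvcard⟩ := grow F z hz (Fintype.card κ) y₀ hy₀P (Nat.sub_le _ _)
  set σ₁ := tightSet F.U z v with hσ₁def
  have hσ₁cones : σ₁ ∈ F.cones := tight_mem_cones F z hz v hvP
  have hτσ₁ : τ ⊆ σ₁ := hτty₀.trans hsub
  have hσ₁S : σ₁ ⊆ S := cone_subset F τ hσ₁cones hτσ₁
  by_cases hρσ₁ : ρ ∈ σ₁
  · -- pivot step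
    have hpos : 0 < Fintype.card κ := hvcard ▸ Finset.card_pos.mpr ⟨ρ, hρσ₁⟩
    obtain ⟨w₀, hw₀0, hw₀k⟩ := exists_ker F.U (σ₁.erase ρ)
      (by rw [Finset.card_erase_of_mem hρσ₁, hvcard]; omega)
    have haρ : (∑ j, F.U ρ j * w₀ j) ≠ 0 := by
      intro h0
      apply hw₀0
      apply eq_zero_of_forall_row F hσ₁cones hvcard hpos
      intro i hi
      by_cases hiρ : i = ρ
      · rw [hiρ]; exact h0
      · exact hw₀k i (Finset.mem_erase.mpr ⟨hiρ, hi⟩)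
    obtain ⟨w, hw0, hwk, haw⟩ : ∃ w : κ → ℝ, w ≠ 0 ∧
        (∀ i ∈ σ₁.erase ρ, ∑ j, F.U i j * w j = 0) ∧ 0 < ∑ j, F.U ρ j * w j := by
      rcases haρ.lt_or_gt with h | h
      · refine ⟨-w₀, neg_ne_zero.mpr hw₀0, fun i hi => ?_, ?_⟩
        · simp only [Pi.neg_apply, mul_neg, Finset.sum_neg_distrib, hw₀k i hi, neg_zero]
        · simp only [Pi.neg_apply, mul_neg, Finset.sum_neg_distrib]
          exact neg_pos.mpr h
      · exact ⟨w₀, hw₀0, hw₀k, h⟩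
    have ha : ∀ i, slk F.U z v i = 0 → 0 ≤ ∑ j, F.U i j * w j := by
      intro i hi
      have hiσ : i ∈ σ₁ := mem_tightSet.mpr hi
      by_cases hiρ : i = ρ
      · rw [hiρ]; exact haw.le
      · exact (hwk i (Finset.mem_erase.mpr ⟨hiρ, hiσ⟩)).ge
    obtain ⟨t, ht, hv'P, i₀, hai₀, hti₀⟩ := push F.U z hz.1 hvP hw0 ha
    set v' := v + t • w with hv'def
    set T' := tightSet F.U z v' with hT'def
    have hT'cones : T' ∈ F.cones := tight_mem_cones F z hz v' hv'P
    have herasesub : σ₁.erase ρ ⊆ T' := by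
      intro i hi
      refine mem_tightSet.mpr ?_
      rw [slk_add_smul, hwk i hi, mul_zero, add_zero]
      exact mem_tightSet.mp (Finset.mem_of_mem_erase hi)
    have hτT' : τ ⊆ T' := by
      intro i hi
      exact herasesub (Finset.mem_erase.mpr ⟨fun he => hρτ (he ▸ hi), hτσ₁ hi⟩)
    have hT'S : T' ⊆ S := cone_subset F τ hT'cones hτT'
    have hρT' : ρ ∉ T' := by
      intro hmem
      have h0 := mem_tightSet.mp hmem
      rw [hv'def, slk_add_smul] at h0
      have hρt : slk F.U z v ρ = 0 := mem_tightSet.mp hρσ₁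
      nlinarith [mul_pos ht haw]
    have hT'sub : T' ⊆ S.erase ρ := fun i hi =>
      Finset.mem_erase.mpr ⟨fun he => hρT' (he ▸ hi), hT'S hi⟩
    have hi₀T' : i₀ ∈ T' := mem_tightSet.mpr hti₀
    have hi₀e : i₀ ∉ σ₁.erase ρ := fun hmem => absurd (hwk i₀ hmem) (ne_of_lt hai₀)
    have hcardge : Fintype.card κ ≤ T'.card := by
      have hins : insert i₀ (σ₁.erase ρ) ⊆ T' := Finset.insert_subset hi₀T' herasesub
      have h2 := Finset.card_le_card hins
      rw [Finset.card_insert_of_notMem hi₀e, Finset.card_erase_of_mem hρσ₁, hvcard] at h2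
      omega
    have hfin : T' = S.erase ρ := by
      refine Finset.eq_of_subset_of_card_le hT'sub ?_
      rw [Finset.card_erase_of_mem hρS, hScard]
      omega
    rw [← hfin]
    exact hT'cones
  · -- ρ ∉ σ₁ : then σ₁ = S.erase ρ already
    have hsub' : σ₁ ⊆ S.erase ρ := fun i hi =>
      Finset.mem_erase.mpr ⟨fun he => hρσ₁ (he ▸ hi), hσ₁S hi⟩
    have hfin : σ₁ = S.erase ρ := by
      refine Finset.eq_of_subset_of_card_le hsub' ?_
      rw [Finset.card_erase_of_mem hρS, hScard, hvcard]
      omega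
    rw [← hfin]
    exact hσ₁cones


-- ==== determinant machinery ====

variable (U : Matrix ι κ ℝ) (S : Finset ι)

/-- The row-indexing map `Option κ → ι` (a bijection onto `S`). -/
noncomputable def eSf (hS : S.card = Fintype.card (Option κ)) : Option κ → ι :=
  fun a => (S.equivFin.symm (Fintype.equivFinOfCardEq hS.symm a) : ι)

variable (hS : S.card = Fintype.card (Option κ))

lemma eSf_mem (a : Option κ) : eSf S hS a ∈ S := (S.equivFin.symm _).2

lemma eSf_injective : Function.Injective (eSf S hS) := by
  intro a b hab
  have := Subtype.ext hab
  simpa using (Fintype.equivFinOfCardEq hS.symm).injective (S.equivFin.symm.injective this)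

lemma eSf_surj {ρ : ι} (hρ : ρ ∈ S) : ∃ a, eSf S hS a = ρ := by
  refine ⟨(Fintype.equivFinOfCardEq hS.symm).symm (S.equivFin ⟨ρ, hρ⟩), ?_⟩
  simp [eSf]

/-- The matrix whose determinant is `Wdet`. -/
noncomputable def Wmat (x : ι → ℝ) : Matrix (Option κ) (Option κ) ℝ :=
  Matrix.of fun a b => Option.elim b (x (eSf S hS a)) (fun k => U (eSf S hS a) k)

lemma Wdet_eq (x : ι → ℝ) : Wdet U S x = (Wmat U S hS x).det := by
  rw [Wdet, dif_pos hS]; rfl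

lemma Wmat_eq_update (x : ι → ℝ) :
    Wmat U S hS x = (Wmat U S hS 0).updateCol none (fun a => x (eSf S hS a)) := by
  ext a b
  cases b <;> simp [Wmat, Matrix.updateCol_apply]

/-- `Wdet` as a linear form in `x`. -/
noncomputable def WL : (ι → ℝ) →ₗ[ℝ] ℝ where
  toFun x := (Wmat U S hS x).det
  map_add' x y := by
    show (Wmat U S hS (x + y)).det = (Wmat U S hS x).det + (Wmat U S hS y).det
    rw [Wmat_eq_update U S hS (x + y), Wmat_eq_update U S hS x, Wmat_eq_update U S hS y,
      show (fun a => (x + y) (eSf S hS a)) =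
        (fun a => x (eSf S hS a)) + (fun a => y (eSf S hS a)) from rfl,
      Matrix.det_updateCol_add]
  map_smul' c x := by
    show (Wmat U S hS (c • x)).det = c • (Wmat U S hS x).det
    rw [Wmat_eq_update U S hS (c • x), Wmat_eq_update U S hS x,
      show (fun a => (c • x) (eSf S hS a)) = c • (fun a => x (eSf S hS a)) from rfl,
      Matrix.det_updateCol_smul, smul_eq_mul]

lemma WL_apply (x : ι → ℝ) : WL U S hS x = Wdet U S x := (Wdet_eq U S hS x).symm

lemma WL_single_notMem {ρ : ι} (hρ : ρ ∉ S) : WL U S hS ((Pi.single ρ 1 : ι → ℝ)) = 0 := by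
  refine Matrix.det_eq_zero_of_column_eq_zero none (fun a => ?_)
  show (Pi.single ρ 1 : ι → ℝ) (eSf S hS a) = 0
  refine Pi.single_eq_of_ne (fun he : eSf S hS a = ρ => hρ ?_) 1
  rw [← he]; exact eSf_mem S hS a

lemma WL_col (j : κ) : WL U S hS (fun i => U i j) = 0 := by
  refine Matrix.det_zero_of_column_eq (M := Wmat U S hS (fun i => U i j))
    (i := (none : Option κ)) (j := some j) (by simp) (fun a => rfl)

lemma WL_decomp (x : ι → ℝ) :
    WL U S hS x = ∑ ρ, x ρ * WL U S hS ((Pi.single ρ 1 : ι → ℝ)) := by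
  have hx : x = ∑ ρ, x ρ • (Pi.single ρ 1 : ι → ℝ) := by
    funext j
    rw [Finset.sum_apply]
    simp [Pi.single_apply]
  conv_lhs => rw [hx]
  rw [map_sum]
  refine Finset.sum_congr rfl (fun ρ _ => ?_)
  rw [_root_.map_smul, smul_eq_mul]

lemma WL_mulVec (y : κ → ℝ) : WL U S hS (U.mulVec y) = 0 := by
  have h : U.mulVec y = ∑ j, y j • (fun i => U i j) := by
    funext i
    rw [Finset.sum_apply]
    simp [Matrix.mulVec, dotProduct, mul_comm]
  rw [h, map_sum]
  simp [WL_col]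

lemma abs_WL_single {ρ : ι} (hρ : ρ ∈ S) :
    |WL U S hS ((Pi.single ρ 1 : ι → ℝ))| = absDetRows U (S.erase ρ) := by
  classical
  obtain ⟨a₀, ha₀⟩ := eSf_surj S hS hρ
  set N := Wmat U S hS (Pi.single ρ 1) with hNdef
  have hcol : ∀ a, N a none = if a = a₀ then 1 else 0 := by
    intro a
    show (Pi.single ρ 1 : ι → ℝ) (eSf S hS a) = _
    by_cases h : a = a₀
    · subst h; rw [ha₀, if_pos rfl]; simp
    · rw [if_neg h]
      refine Pi.single_eq_of_ne (fun he : eSf S hS a = ρ => h ?_) 1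
      exact eSf_injective S hS (by rw [he, ha₀])
  set sw := Equiv.swap a₀ (none : Option κ) with hswdef
  have hswnone : sw none = a₀ := Equiv.swap_apply_right a₀ none
  have hswap : ∀ j : κ, sw (some j) ≠ a₀ := by
    intro j h
    have h2 : some j = none := sw.injective (by rw [h, hswnone])
    exact Option.some_ne_none j h2
  have habs1 : |(N.submatrix sw id).det| = |N.det| := by
    rw [Matrix.det_permute, abs_mul]
    rcases Int.units_eq_one_or (Equiv.Perm.sign sw) with h | h <;> simp [h]
  set e : κ ⊕ Unit ≃ Option κ := (Equiv.optionEquivSumPUnit κ).symm with hedef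
  set Amat : Matrix κ κ ℝ := Matrix.of fun j k : κ => U (eSf S hS (sw (some j))) k with hAdef
  have hblock : (N.submatrix sw id).submatrix e e =
      Matrix.fromBlocks Amat 0 (Matrix.of fun (_ : Unit) k => U ρ k)
        (Matrix.of fun (_ _ : Unit) => (1:ℝ)) := by
    ext i j
    rcases i with i | i <;> rcases j with j | j
    · rfl
    · show N (sw (some i)) none = 0
      rw [hcol, if_neg (hswap i)]
    · show N (sw none) (some j) = U ρ j
      rw [hswnone]
      show U (eSf S hS a₀) j = U ρ j
      rw [ha₀]
    · show N (sw none) none = 1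
      rw [hswnone, hcol, if_pos rfl]
  have hdet1 : (N.submatrix sw id).det = Amat.det := by
    rw [← Matrix.det_submatrix_equiv_self e, hblock, Matrix.det_fromBlocks_zero₁₂]
    simp [Matrix.det_unique]
  have hρc : (S.erase ρ).card = Fintype.card κ := by
    rw [Finset.card_erase_of_mem hρ, hS, Fintype.card_option]
    omega
  rw [absDetRows, dif_pos hρc]
  set E₂ : κ ≃ {x // x ∈ S.erase ρ} :=
    (Fintype.equivFinOfCardEq hρc.symm).trans (S.erase ρ).equivFin.symm with hE₂
  have hr₁mem : ∀ j : κ, eSf S hS (sw (some j)) ∈ S.erase ρ := by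
    intro j
    refine Finset.mem_erase.mpr ⟨fun he : eSf S hS (sw (some j)) = ρ =>
      hswap j (eSf_injective S hS (by rw [he, ha₀])), eSf_mem S hS _⟩
  set r₁' : κ → {x // x ∈ S.erase ρ} := fun j => ⟨eSf S hS (sw (some j)), hr₁mem j⟩ with hr₁
  have hb₁ : Function.Bijective r₁' := by
    rw [Fintype.bijective_iff_injective_and_card]
    constructor
    · intro j j' hjj'
      have h1 := congrArg Subtype.val hjj'
      have h2 := eSf_injective S hS h1
      have h3 := sw.injective h2
      exact Option.some_injective _ h3
    · rw [Fintype.card_coe, hρc]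
  set π : κ ≃ κ := (Equiv.ofBijective r₁' hb₁).trans E₂.symm with hπ
  have hπcomp : ∀ j, (E₂ (π j) : ι) = eSf S hS (sw (some j)) := by
    intro j
    simp [hπ, Equiv.ofBijective, hr₁]
  have hsub : Amat = (Matrix.of fun j k : κ => U (E₂ j : ι) k).submatrix π id := by
    ext j k
    show U (eSf S hS (sw (some j))) k = U (E₂ (π j) : ι) k
    rw [hπcomp]
  have habs2 : |Amat.det| = |(Matrix.of fun j k : κ => U (E₂ j : ι) k).det| := by
    rw [hsub, Matrix.det_permute, abs_mul]
    rcases Int.units_eq_one_or (Equiv.Perm.sign π) with h | h <;> simp [h]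
  calc |WL U S hS (Pi.single ρ 1)| = |N.det| := rfl
    _ = |(N.submatrix sw id).det| := habs1.symm
    _ = |Amat.det| := by rw [hdet1]
    _ = |(Matrix.of fun j k : κ =>
          U (((S.erase ρ).equivFin.symm (Fintype.equivFinOfCardEq hρc.symm j)) : ι) k).det| :=
      habs2

lemma absDetRows_ne_zero (F : SimplicialFan ι κ) {σ : Finset ι} (hσ : σ ∈ F.cones)
    (hc : σ.card = Fintype.card κ) : absDetRows F.U σ ≠ 0 := by
  rw [absDetRows, dif_pos hc, abs_ne_zero]
  set E : κ ≃ {x // x ∈ σ} := (Fintype.equivFinOfCardEq hc.symm).trans σ.equivFin.symm with hE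
  have hli : LinearIndependent ℝ (fun j : κ => F.U (E j : ι)) :=
    (F.indep σ hσ).comp E E.injective
  have hli' : LinearIndependent ℝ
      (fun j : κ => (Matrix.of fun j k : κ =>
        F.U ((σ.equivFin.symm (Fintype.equivFinOfCardEq hc.symm j)) : ι) k) j) := hli
  have hu := Matrix.linearIndependent_rows_iff_isUnit.mp hli'
  exact ((Matrix.isUnit_iff_isUnit_det _).mp hu).ne_zero


theorem statement13' {ι κ : Type*} [Fintype ι] [DecidableEq ι] [Fintype κ] [DecidableEq κ]
    (F : SimplicialFan ι κ) (hrank : F.U.rank = Fintype.card κ)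
    (z : ι → ℝ) (hz : IsNormalFanOf F z)
    (k : ℕ) (τ : Finset ι) (hτ : τ ∈ F.cones) (hcard : τ.card = k) (hk : k < Fintype.card κ)
    (hsimplex : (nbF F.cones τ).card = Fintype.card κ - k + 1) :
    (∀ x : ι → ℝ, Wdet F.U (nbF F.cones τ ∪ τ) x = 0 → (∀ ρ ∈ τ, x ρ = 0) →
      MvPolynomial.eval x (Adj F.U F.cones) = 0) ∧
    {x : ι → ℝ | Wdet F.U (nbF F.cones τ ∪ τ) x = 0} =
      ↑(Submodule.span ℝ ((fun ρ => (Pi.single ρ 1 : ι → ℝ)) '' ↑((nbF F.cones τ ∪ τ)ᶜ)) ⊔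
          LinearMap.range F.U.mulVecLin) ∧
    Module.finrank ℝ
        ↥(Submodule.span ℝ ((fun ρ => (Pi.single ρ 1 : ι → ℝ)) '' ↑((nbF F.cones τ ∪ τ)ᶜ)) ⊔
            LinearMap.range F.U.mulVecLin) =
      Fintype.card ι - 1 := by
  classical
  have hd : 0 < Fintype.card κ := lt_of_le_of_lt (Nat.zero_le k) hk
  set S := nbF F.cones τ ∪ τ with hSdef
  have hdisj : Disjoint (nbF F.cones τ) τ := by
    rw [Finset.disjoint_left]
    intro ρ hρ
    exact (Finset.mem_filter.mp hρ).2.1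
  have hScard : S.card = Fintype.card κ + 1 := by
    rw [hSdef, Finset.card_union_of_disjoint hdisj, hsimplex, hcard]
    omega
  have hS : S.card = Fintype.card (Option κ) := by rw [hScard, Fintype.card_option]
  have herase : ∀ ρ ∈ nbF F.cones τ, S.erase ρ ∈ F.cones :=
    erase_mem_cones F z hz τ hτ hScard
  have hτρ : ∀ ρ ∈ nbF F.cones τ, ρ ∉ τ := fun ρ hρ => (Finset.mem_filter.mp hρ).2.1
  have hnbS : nbF F.cones τ ⊆ S := Finset.subset_union_left
  have hτS : τ ⊆ S := Finset.subset_union_right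
  have hcard_erase : ∀ ρ ∈ nbF F.cones τ, (S.erase ρ).card = Fintype.card κ := fun ρ hρ => by
    rw [Finset.card_erase_of_mem (hnbS hρ), hScard]
    omega
  set C : ι → ℝ := fun ρ => WL F.U S hS ((Pi.single ρ 1 : ι → ℝ)) with hCdef
  have hC0 : ∀ ρ, ρ ∉ S → C ρ = 0 := fun ρ hρ => WL_single_notMem F.U S hS hρ
  have habsC : ∀ ρ ∈ nbF F.cones τ, |C ρ| = absDetRows F.U (S.erase ρ) :=
    fun ρ hρ => abs_WL_single F.U S hS (hnbS hρ)
  have hCne : ∀ ρ ∈ nbF F.cones τ, C ρ ≠ 0 := by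
    intro ρ hρ h0
    have hne := absDetRows_ne_zero F (herase ρ hρ) (hcard_erase ρ hρ)
    rw [← habsC ρ hρ, h0, abs_zero] at hne
    exact hne rfl
  have hrel : ∀ j, (∑ ρ, C ρ * F.U ρ j) = 0 := by
    intro j
    have h1 := WL_col F.U S hS j
    rw [WL_decomp] at h1
    rw [← h1]
    exact Finset.sum_congr rfl fun ρ _ => mul_comm _ _
  set c : ℝ := ∑ ρ, C ρ * z ρ with hcdef
  have hslacksum : ∀ v : κ → ℝ, (∑ ρ, C ρ * slk F.U z v ρ) = c := by
    intro v
    have hsum : (∑ ρ, C ρ * slk F.U z v ρ)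
        = (∑ ρ, C ρ * ∑ j, F.U ρ j * v j) + ∑ ρ, C ρ * z ρ := by
      rw [← Finset.sum_add_distrib]
      exact Finset.sum_congr rfl fun ρ _ => by rw [slk]; ring
    rw [hsum, hcdef]
    have hzero : (∑ ρ, C ρ * ∑ j, F.U ρ j * v j) = 0 := by
      calc (∑ ρ, C ρ * ∑ j, F.U ρ j * v j) = ∑ ρ, ∑ j, (C ρ * F.U ρ j) * v j := by
            refine Finset.sum_congr rfl fun ρ _ => ?_
            rw [Finset.mul_sum]
            exact Finset.sum_congr rfl fun j _ => by ring
        _ = ∑ j, (∑ ρ, C ρ * F.U ρ j) * v j := by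
            rw [Finset.sum_comm]
            exact Finset.sum_congr rfl fun j _ => (Finset.sum_mul _ _ _).symm
        _ = 0 := by simp [hrel]
    rw [hzero, zero_add]
  have hface : ∀ ρ ∈ nbF F.cones τ, ∃ v ∈ Pz F.U z,
      (∀ i ∈ S.erase ρ, slk F.U z v i = 0) ∧ C ρ * slk F.U z v ρ = c := by
    intro ρ hρ
    obtain ⟨v, hvP, hvt⟩ := (hz.2.2 _).mp (herase ρ hρ)
    refine ⟨v, hvP, hvt, ?_⟩
    rw [← hslacksum v]
    symm
    refine Finset.sum_eq_single ρ (fun b _ hb => ?_) (fun h => absurd (Finset.mem_univ ρ) h)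
    by_cases hbS : b ∈ S
    · have h5 := hvt b (Finset.mem_erase.mpr ⟨hb, hbS⟩)
      rw [show slk F.U z v b = 0 from h5, mul_zero]
    · rw [hC0 b hbS, zero_mul]
  have hnbne : (nbF F.cones τ).Nonempty := by
    rw [← Finset.card_pos, hsimplex]
    omega
  have hcne : c ≠ 0 := by
    intro h0
    obtain ⟨ρ₀, hρ₀⟩ := hnbne
    obtain ⟨v, hvP, hvt, hCs⟩ := hface ρ₀ hρ₀
    rw [h0] at hCs
    have hs0 : slk F.U z v ρ₀ = 0 := by
      rcases mul_eq_zero.mp hCs with h | h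
      · exact absurd h (hCne ρ₀ hρ₀)
      · exact h
    have hSmem : S ∈ F.cones := (hz.2.2 S).mpr ⟨v, hvP, fun i hi => by
      by_cases hiρ : i = ρ₀
      · rw [hiρ]; exact hs0
      · exact hvt i (Finset.mem_erase.mpr ⟨hiρ, hi⟩)⟩
    have := card_cone_le F hSmem
    omega
  have hsign : ∀ ρ ∈ nbF F.cones τ, absDetRows F.U (S.erase ρ) = (|c| / c) * C ρ := by
    intro ρ hρ
    obtain ⟨v, hvP, hvt, hCs⟩ := hface ρ hρ
    set s := slk F.U z v ρ with hsdef
    have hs0 : 0 ≤ s := hvP ρ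
    have hspos : 0 < s := by
      rcases lt_or_eq_of_le hs0 with h | h
      · exact h
      · exact absurd (by rw [← hCs, ← h, mul_zero]) hcne
    have hCval : C ρ = c / s := (eq_div_iff hspos.ne').mpr hCs
    rw [← habsC ρ hρ, hCval, abs_div, abs_of_pos hspos]
    field_simp
  -- ===== Part 2 and 3 setup =====
  set Aspan := Submodule.span ℝ ((fun ρ => (Pi.single ρ 1 : ι → ℝ)) '' ↑(Sᶜ)) with hAspan
  set Brange := LinearMap.range F.U.mulVecLin with hBrange
  have hAfr : Module.finrank ℝ Aspan = Fintype.card ι - (Fintype.card κ + 1) := by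
    rw [hAspan, Set.image_eq_range]
    have hli : LinearIndependent ℝ
        (fun ρ : ↑(↑(Sᶜ) : Set ι) => (Pi.single (ρ : ι) 1 : ι → ℝ)) := by
      have hb := (Pi.basisFun ℝ ι).linearIndependent
      have h2 := hb.comp (fun ρ : ↑(↑(Sᶜ) : Set ι) => (ρ : ι)) Subtype.val_injective
      convert h2 using 1
      funext ρ
      simp [Function.comp]
    rw [finrank_span_eq_card hli]
    simp only [Finset.coe_sort_coe, Fintype.card_coe, Finset.card_compl, Finset.card_univ,
      hScard]
  have hsupp : ∀ x ∈ Aspan, ∀ ρ ∈ S, x ρ = 0 := by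
    intro x hx
    induction hx using Submodule.span_induction with
    | mem x hx =>
      obtain ⟨ρ', hρ', rfl⟩ := hx
      intro ρ hρ
      have hρ'S : ρ' ∉ S := by
        have : ρ' ∈ Sᶜ := by exact_mod_cast hρ'
        exact Finset.mem_compl.mp this
      exact Pi.single_eq_of_ne (fun he : ρ = ρ' => hρ'S (he ▸ hρ)) 1
    | zero => intro ρ _; rfl
    | add x y _ _ hx hy => intro ρ hρ; simp [hx ρ hρ, hy ρ hρ]
    | smul c x _ hx => intro ρ hρ; simp [hx ρ hρ]
  have hABbot : Aspan ⊓ Brange = ⊥ := by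
    rw [Submodule.eq_bot_iff]
    rintro x ⟨hxA, hxB⟩
    obtain ⟨y, rfl⟩ := hxB
    have hy0 : y = 0 := by
      obtain ⟨ρ₀, hρ₀⟩ := hnbne
      apply eq_zero_of_forall_row F (herase ρ₀ hρ₀) (hcard_erase ρ₀ hρ₀) hd
      intro i hi
      have h3 := hsupp _ hxA i (Finset.mem_of_mem_erase hi)
      simpa [Matrix.mulVecLin_apply, Matrix.mulVec, dotProduct] using h3
    rw [hy0, map_zero]
  have hBfr : Module.finrank ℝ Brange = Fintype.card κ := hrank
  have hcardS_le : Fintype.card κ + 1 ≤ Fintype.card ι := by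
    have h := Finset.card_le_univ S
    rw [hScard] at h
    exact h
  have hVfr : Module.finrank ℝ ↥(Aspan ⊔ Brange) = Fintype.card ι - 1 := by
    have h := Submodule.finrank_sup_add_finrank_inf_eq Aspan Brange
    rw [hABbot, finrank_bot, hAfr, hBfr] at h
    omega
  have hle : Aspan ⊔ Brange ≤ LinearMap.ker (WL F.U S hS) := by
    rw [sup_le_iff]
    constructor
    · rw [Submodule.span_le]
      rintro _ ⟨ρ, hρ, rfl⟩
      refine LinearMap.mem_ker.mpr (WL_single_notMem F.U S hS ?_)
      have : ρ ∈ Sᶜ := by exact_mod_cast hρ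
      exact Finset.mem_compl.mp this
    · rintro _ ⟨y, rfl⟩
      exact LinearMap.mem_ker.mpr (WL_mulVec F.U S hS y)
  have hWLne : WL F.U S hS ≠ 0 := by
    obtain ⟨ρ₀, hρ₀⟩ := hnbne
    intro h0
    exact hCne ρ₀ hρ₀ (by rw [hCdef]; rw [h0]; rfl)
  have hkerfr : Module.finrank ℝ (LinearMap.ker (WL F.U S hS)) ≤ Fintype.card ι - 1 := by
    have h := LinearMap.finrank_range_add_finrank_ker (WL F.U S hS)
    have hrpos : Module.finrank ℝ (LinearMap.range (WL F.U S hS)) ≠ 0 := by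
      intro h0
      exact hWLne (LinearMap.range_eq_bot.mp (Submodule.finrank_eq_zero.mp h0))
    rw [Module.finrank_fintype_fun_eq_card] at h
    omega
  have hkereq : Aspan ⊔ Brange = LinearMap.ker (WL F.U S hS) :=
    Submodule.eq_of_le_of_finrank_le hle (by rw [hVfr]; exact hkerfr)
  refine ⟨?_, ?_, hVfr⟩
  · -- part 1
    intro x hW hxτ
    have hWL : WL F.U S hS x = 0 := by rw [WL_apply]; exact hW
    have hsumzero : (∑ ρ ∈ nbF F.cones τ, x ρ * C ρ) = 0 := by
      have hdec := WL_decomp F.U S hS x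
      rw [hWL] at hdec
      have hsplit : (∑ ρ, x ρ * C ρ) = (∑ ρ ∈ S, x ρ * C ρ) + ∑ ρ ∈ Sᶜ, x ρ * C ρ :=
        (Finset.sum_add_sum_compl S _).symm
      have hSc : (∑ ρ ∈ Sᶜ, x ρ * C ρ) = 0 :=
        Finset.sum_eq_zero fun ρ hρ => by rw [hC0 ρ (Finset.mem_compl.mp hρ), mul_zero]
      have hSsplit : (∑ ρ ∈ S, x ρ * C ρ)
          = (∑ ρ ∈ nbF F.cones τ, x ρ * C ρ) + ∑ ρ ∈ τ, x ρ * C ρ := by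
        rw [hSdef, Finset.sum_union hdisj]
      have hτ0 : (∑ ρ ∈ τ, x ρ * C ρ) = 0 :=
        Finset.sum_eq_zero fun ρ hρ => by rw [hxτ ρ hρ, zero_mul]
      have h4 : (0:ℝ) = ∑ ρ, x ρ * C ρ := hdec
      rw [hsplit, hSsplit, hτ0, hSc, add_zero, add_zero] at h4
      exact h4.symm
    rw [Adj, map_sum]
    have hev : ∀ σ : Finset ι, MvPolynomial.eval x
        (MvPolynomial.C (absDetRows F.U σ) * ∏ ρ ∈ σᶜ, MvPolynomial.X ρ)
        = absDetRows F.U σ * ∏ ρ ∈ σᶜ, x ρ := by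
      intro σ
      simp [MvPolynomial.eval_prod]
    rw [Finset.sum_congr rfl (fun σ _ => hev σ)]
    set Φ := F.cones.filter (fun σ => σ.card = Fintype.card κ) with hΦ
    have hstep1 : (∑ σ ∈ Φ, absDetRows F.U σ * ∏ ρ ∈ σᶜ, x ρ)
        = ∑ σ ∈ Φ.filter (fun σ => τ ⊆ σ), absDetRows F.U σ * ∏ ρ ∈ σᶜ, x ρ := by
      symm
      refine Finset.sum_filter_of_ne (fun σ hσ hne0 => ?_)
      by_contra hτσ
      obtain ⟨ρ, hρτ', hρσ⟩ := Finset.not_subset.mp hτσ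
      exact hne0 (by rw [Finset.prod_eq_zero (Finset.mem_compl.mpr hρσ) (hxτ ρ hρτ'), mul_zero])
    have hset : Φ.filter (fun σ => τ ⊆ σ) = (nbF F.cones τ).image (fun ρ => S.erase ρ) := by
      ext σ
      simp only [Finset.mem_filter, Finset.mem_image, hΦ]
      constructor
      · rintro ⟨⟨hσc, hσcard⟩, hτσ⟩
        have hσS : σ ⊆ S := cone_subset F τ hσc hτσ
        have hcard1 : (S \ σ).card = 1 := by
          rw [Finset.card_sdiff_of_subset hσS, hScard, hσcard]
          omega
        obtain ⟨ρ, hρ⟩ := Finset.card_eq_one.mp hcard1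
        have hρS : ρ ∈ S ∧ ρ ∉ σ := by
          have hm : ρ ∈ S \ σ := hρ ▸ Finset.mem_singleton_self ρ
          exact ⟨(Finset.mem_sdiff.mp hm).1, (Finset.mem_sdiff.mp hm).2⟩
        refine ⟨ρ, ?_, ?_⟩
        · rcases Finset.mem_union.mp hρS.1 with h | h
          · exact h
          · exact absurd (hτσ h) hρS.2
        · refine (Finset.eq_of_subset_of_card_le
            (fun i hi => Finset.mem_erase.mpr ⟨fun he : i = ρ => hρS.2 (by rw [← he]; exact hi), hσS hi⟩) ?_).symm
          rw [Finset.card_erase_of_mem hρS.1, hScard, hσcard]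
          omega
      · rintro ⟨ρ, hρ, rfl⟩
        exact ⟨⟨herase ρ hρ, hcard_erase ρ hρ⟩,
          fun i hi => Finset.mem_erase.mpr ⟨fun he : i = ρ => hτρ ρ hρ (by rw [← he]; exact hi), hτS hi⟩⟩
    have hinj : ∀ ρ ∈ nbF F.cones τ, ∀ ρ' ∈ nbF F.cones τ, S.erase ρ = S.erase ρ' → ρ = ρ' := by
      intro ρ hρ ρ' hρ' he
      by_contra hne
      have hmem : ρ ∈ S.erase ρ' := Finset.mem_erase.mpr ⟨hne, hnbS hρ⟩
      rw [← he] at hmem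
      exact Finset.notMem_erase ρ S hmem
    rw [hstep1, hset, Finset.sum_image hinj]
    have hterm : ∀ ρ ∈ nbF F.cones τ, absDetRows F.U (S.erase ρ) * ∏ ρ' ∈ (S.erase ρ)ᶜ, x ρ'
        = ((|c| / c) * (x ρ * C ρ)) * ∏ ρ' ∈ Sᶜ, x ρ' := by
      intro ρ hρ
      have hcompl : (S.erase ρ)ᶜ = insert ρ Sᶜ := by
        ext i
        simp only [Finset.mem_compl, Finset.mem_erase, Finset.mem_insert, not_and]
        by_cases hiρ : i = ρ
        · simp [hiρ, hnbS hρ]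
        · simp [hiρ]
      have hρSc : ρ ∉ Sᶜ := by
        rw [Finset.mem_compl, not_not]
        exact hnbS hρ
      rw [hsign ρ hρ, hcompl, Finset.prod_insert hρSc]
      ring
    rw [Finset.sum_congr rfl hterm, ← Finset.sum_mul]
    have hz0 : (∑ ρ ∈ nbF F.cones τ, (|c| / c) * (x ρ * C ρ)) = 0 := by
      rw [← Finset.mul_sum]
      have : (∑ ρ ∈ nbF F.cones τ, x ρ * C ρ) = 0 := hsumzero
      rw [this, mul_zero]
    rw [hz0, zero_mul]
  · -- part 2
    ext x
    simp only [Set.mem_setOf_eq, SetLike.mem_coe]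
    rw [hkereq]
    rw [LinearMap.mem_ker, WL_apply]

end S13Aux

/-- Let `Δ` be a face of the simple polytope `P` which is a simplex of
dimension `d - k > 0`, with normal cone `τ = σ_Δ ∈ Σ(k)`. Then the linear subspace
`{W_Δ(x) = 0, x_ρ = 0 (ρ ∈ τ)}` (of projective dimension `n - k - 2`) is contained in
the adjoint hypersurface `A_Σ`; moreover the hyperplane `{W_Δ(x) = 0} ⊆ ℝⁿ` equals
`span(e_ρ : ρ ∈ K_Δ) + im(U)` with `K_Δ = Σ(1) ∖ (nb(Δ) ∪ σ_Δ(1))` — the linear span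
of an `(n-1)`-dimensional cone of the chamber complex `Ch(U)`, so the subspace is also
contained in the projectivized Zariski closure of the `(n-1)`-skeleton of `Ch(U)`. -/
theorem statement13 {ι κ : Type*} [Fintype ι] [DecidableEq ι] [Fintype κ] [DecidableEq κ]
    (F : SimplicialFan ι κ) (hrank : F.U.rank = Fintype.card κ)
    (z : ι → ℝ) (hz : IsNormalFanOf F z)
    (k : ℕ) (τ : Finset ι) (hτ : τ ∈ F.cones) (hcard : τ.card = k) (hk : k < Fintype.card κ)
    (hsimplex : (nbF F.cones τ).card = Fintype.card κ - k + 1) :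
    (∀ x : ι → ℝ, Wdet F.U (nbF F.cones τ ∪ τ) x = 0 → (∀ ρ ∈ τ, x ρ = 0) →
      MvPolynomial.eval x (Adj F.U F.cones) = 0) ∧
    {x : ι → ℝ | Wdet F.U (nbF F.cones τ ∪ τ) x = 0} =
      ↑(Submodule.span ℝ ((fun ρ => (Pi.single ρ 1 : ι → ℝ)) '' ↑((nbF F.cones τ ∪ τ)ᶜ)) ⊔
          LinearMap.range F.U.mulVecLin) ∧
    Module.finrank ℝ
        ↥(Submodule.span ℝ ((fun ρ => (Pi.single ρ 1 : ι → ℝ)) '' ↑((nbF F.cones τ ∪ τ)ᶜ)) ⊔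
            LinearMap.range F.U.mulVecLin) =
      Fintype.card ι - 1 := by
  exact statement13' F hrank z hz k τ hτ hcard hk hsimplex
end

section
/- Let Σ be a simplicial polyhedral fan in ℝ^d with n rays and ray matrix U of rank d, such that every cone of Σ is a face of a d-dimensional cone (Σ = Σ̄). Let M be the |Σ(1)|×|Σ(d)| matrix with M_{ρ,σ} = |det U_σ| if ρ ∉ σ(1) and M_{ρ,σ} = 0 otherwise, and let φ_Σ : ℙ^{n−1}∖Z(Σ) → ℙ^{|Σ(d)|−1} be the monomial map φ_Σ(x) = (x^σ̂)_{σ∈Σ(d)} with x^σ̂ = ∏_{ρ∉σ(1)} x_ρ. If x ∈ ℙ^{n−1} belongs to Sing(A_Σ)∖Z(Σ), then M·φ_Σ(x) = 0. -/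
open MvPolynomial Finset MeasureTheory
open scoped ENNReal

lemma pderiv_prod_X' {ι : Type*} [DecidableEq ι] (ρ : ι) (s : Finset ι) :
    MvPolynomial.pderiv ρ (∏ ρ' ∈ s, (MvPolynomial.X ρ' : MvPolynomial ι ℝ)) =
      if ρ ∈ s then ∏ ρ' ∈ s.erase ρ, MvPolynomial.X ρ' else 0 := by
  induction s using Finset.induction with
  | empty => simp
  | @insert a s ha ih =>
    rw [Finset.prod_insert ha, pderiv_mul, ih]
    by_cases h : ρ = a
    · subst h
      simp [ha, Finset.erase_insert ha, pderiv_X_self]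
    · rw [pderiv_X_of_ne (Ne.symm h)]
      by_cases hs : ρ ∈ s
      · simp only [hs, if_true, Finset.mem_insert, h, false_or, zero_mul, zero_add]
        rw [Finset.erase_insert_of_ne (Ne.symm h),
          Finset.prod_insert (fun hc => ha (Finset.mem_of_mem_erase hc))]
      · simp [hs, h]

/-- Suppose every cone of `Σ` is a face of a `d`-dimensional cone
(`Σ = Σ̄`). Let `M` be the `Σ(1) × Σ(d)` matrix with `M_{ρ,σ} = |det U_σ|` if `ρ ∉ σ`
and `0` otherwise, and let `φ_Σ(x) = (∏_{ρ ∉ σ} x_ρ)_{σ ∈ Σ(d)}` be the monomial map.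
If `x ∈ Sing(A_Σ) ∖ Z(Σ)` — i.e. all partials of `Adj_Σ` vanish at `x`, but `x` is not
a common zero of the irrelevant ideal — then `M · φ_Σ(x) = 0`. -/
theorem statement16 {ι κ : Type*} [Fintype ι] [DecidableEq ι] [Fintype κ] [DecidableEq κ]
    (F : SimplicialFan ι κ) (hrank : F.U.rank = Fintype.card κ)
    (hbar : ∀ σ ∈ F.cones, ∃ σ' ∈ F.cones, σ ⊆ σ' ∧ σ'.card = Fintype.card κ)
    (x : ι → ℂ)
    (hsing : ∀ ρ : ι, MvPolynomial.aeval x (MvPolynomial.pderiv ρ (Adj F.U F.cones)) = 0)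
    (hnotZ : ∃ σ ∈ F.cones, (∏ ρ ∈ σᶜ, x ρ) ≠ 0) :
    ∀ ρ : ι, ∑ σ ∈ F.cones.filter fun σ => σ.card = Fintype.card κ,
      (if ρ ∈ σ then 0 else (absDetRows F.U σ : ℂ)) * ∏ ρ' ∈ σᶜ, x ρ' = 0  := by
  intro ρ
  have key : ∑ σ ∈ F.cones.filter fun σ => σ.card = Fintype.card κ,
      (if ρ ∈ σ then 0 else (absDetRows F.U σ : ℂ)) * ∏ ρ' ∈ σᶜ, x ρ' =
      (x ρ) * MvPolynomial.aeval x (MvPolynomial.pderiv ρ (Adj F.U F.cones)) := by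
    rw [Adj, map_sum, map_sum, Finset.mul_sum]
    refine Finset.sum_congr rfl fun σ _ => ?_
    rw [pderiv_C_mul, map_mul, MvPolynomial.aeval_C, pderiv_prod_X']
    by_cases hρ : ρ ∈ σ
    · have : ρ ∉ σᶜ := by simp [hρ]
      simp [hρ, this]
    · have hρc : ρ ∈ σᶜ := Finset.mem_compl.mpr hρ
      simp only [hρc, if_true, hρ, if_false]
      rw [map_prod]
      simp only [MvPolynomial.aeval_X]
      rw [← Finset.mul_prod_erase _ _ hρc]
      rw [show (algebraMap ℝ ℂ) (absDetRows F.U σ) = ((absDetRows F.U σ : ℂ)) from rfl]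
      ring
  rw [key, hsing ρ, mul_zero]
end
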